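/- Work in a monster model of a dependent theory. If the formula φ(x,b) defines a stable set, then there is a formula θ(y) ∈ tp(b/∅) such that the formula φ(x,y) ∧ θ(y) has NOP (does not have the order property). -/

import Mathlib

/-!  Common definitions for formalizing "Unstable structures definable in o-minimal
theories" by Hasson and Onshuus. -/

namespace OMinPaper

open FirstOrder FirstOrder.Language Set Cardinal

universe u v w x

/-- Conjunction over a finset (the older Mathlib `finIInf`). -/
noncomputable def finIInf {L : FirstOrder.Language.{v, w}} {α : Type*} {β : Type*} {n : ℕ}
    (s : Finset β) (f : β → L.BoundedFormula α n) : L.BoundedFormula α n :=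
  (s.toList.map f).foldr (· ⊓ ·) ⊤

theorem realize_finIInf {L : FirstOrder.Language.{v, w}} {M : Type u} [L.Structure M]
    {α : Type*} {β : Type*} {n : ℕ} {s : Finset β} {f : β → L.BoundedFormula α n}
    {v : α → M} {v' : Fin n → M} :
    (finIInf s f).Realize v v' ↔ ∀ b ∈ s, (f b).Realize v v' := by
  simp only [finIInf, BoundedFormula.realize_foldr_inf, List.mem_map, Finset.mem_toList,
    forall_exists_index, and_imp, forall_apply_eq_imp_iff₂]





/-! ### Order-theoretic and topological notions on a linear order -/

section Order

variable {M : Type u} [LinearOrder M]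

/-- A subset of a linear order which is a single point or an open interval
(endpoints allowed to be `±∞`). -/
def IsPtOrInterval (s : Set M) : Prop :=
  (∃ a, s = {a}) ∨ (∃ a b, s = Set.Ioo a b) ∨ (∃ a, s = Set.Iio a) ∨
    (∃ a, s = Set.Ioi a) ∨ s = Set.univ

/-- A finite union of points and open intervals. -/
def FinUnionPtsIntervals (s : Set M) : Prop :=
  ∃ F : Set (Set M), F.Finite ∧ (∀ t ∈ F, IsPtOrInterval t) ∧ s = ⋃₀ F

/-- A set of `n`-tuples has an interior point (for the product order topology) iff it
contains a nonempty open box. -/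
def HasIntPt {n : ℕ} (Y : Set (Fin n → M)) : Prop :=
  ∃ a b : Fin n → M, (∀ i, a i < b i) ∧
    {v : Fin n → M | ∀ i, a i < v i ∧ v i < b i} ⊆ Y

/-- `DimGE Y n`: the image of `Y` under some projection onto `n` of the coordinates has
nonempty interior (in the product order topology). -/
def DimGE {ι : Type} (Y : Set (ι → M)) (n : ℕ) : Prop :=
  ∃ σ : Fin n → ι, Function.Injective σ ∧ HasIntPt ((fun w => w ∘ σ) '' Y)

/-- `DimEq Y n`: the (o-minimal) dimension of `Y` equals `n`: `n` is the largest number of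
coordinates onto which `Y` projects with nonempty interior. -/
def DimEq {ι : Type} (Y : Set (ι → M)) (n : ℕ) : Prop :=
  DimGE Y n ∧ ∀ m : ℕ, DimGE Y m → m ≤ n

/-- `e` is in the interior of `s` with respect to the order topology. -/
def InOrdInterior (s : Set M) (e : M) : Prop :=
  (∃ a b, a < e ∧ e < b ∧ Set.Ioo a b ⊆ s) ∨ (∃ b, e < b ∧ Set.Iio b ⊆ s) ∨
    (∃ a, a < e ∧ Set.Ioi a ⊆ s) ∨ s = Set.univ

/-- Closure of a set of tuples in the product of order topologies. -/
def OrdClosure {ι : Type} (S : Set (ι → M)) : Set (ι → M) :=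
  letI : TopologicalSpace M := Preorder.topology M
  closure S

/-- Frontier (topological boundary) of a set of tuples in the product of order topologies. -/
def OrdFrontier {ι : Type} (S : Set (ι → M)) : Set (ι → M) :=
  letI : TopologicalSpace M := Preorder.topology M
  frontier S

end Order





/-! ### First-order logic helpers -/

section Logic

variable {L : FirstOrder.Language.{v, w}} {C : Type u} [L.Structure C]

/-- Satisfaction of a formula `φ(x; y)` with variables split into a parameter block `Fin m`
and a variable block `α`, at the parameter tuple `b` and the variable tuple `v`. -/
def Sat {m : ℕ} {α : Type} (φ : L.Formula (Fin m ⊕ α)) (b : Fin m → C) (v : α → C) : Prop :=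
  φ.Realize (Sum.elim b v)

variable (L) in
/-- The tuples `a` and `a'` have the same complete type over the parameter set `A`. -/
def EqTpOn (A : Set C) {α : Type} (a a' : α → C) : Prop :=
  ∀ (m : ℕ) (φ : L.Formula (Fin m ⊕ α)) (b : Fin m → C), (∀ i, b i ∈ A) →
    (Sat φ b a ↔ Sat φ b a')

/-- The formula `φ(x; y)` (with `x` of sort `α` and `y` of sort `β`) has the order property. -/
def FormulaHasOP {α β : Type} (φ : L.Formula (α ⊕ β)) : Prop :=
  ∃ (a : ℕ → α → C) (b : ℕ → β → C), ∀ i j : ℕ, (φ.Realize (Sum.elim (a i) (b j)) ↔ i < j)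

/-- The formula `φ(x; y)` has the independence property. -/
def FormulaHasIP {α β : Type} (φ : L.Formula (α ⊕ β)) : Prop :=
  ∃ a : ℕ → β → C, ∀ I J : Finset ℕ, Disjoint I J →
    ∃ c : α → C, (∀ i ∈ I, φ.Realize (Sum.elim c (a i))) ∧
      (∀ j ∈ J, ¬ φ.Realize (Sum.elim c (a j)))

variable (L C) in
/-- The (theory of the) structure `C` is dependent (NIP): no formula has the
independence property. -/
def IsDependent : Prop :=
  ∀ (m r : ℕ) (φ : L.Formula (Fin m ⊕ Fin r)), ¬ @FormulaHasIP L C _ _ _ φ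

variable (L) in
/-- A set `X` of `α`-tuples is unstable: some formula (with parameters) orders an
infinite sequence of elements of `X` against a sequence of tuples. -/
def UnstableSet {α : Type} (X : Set (α → C)) : Prop :=
  ∃ (m : ℕ) (φ : L.Formula (α ⊕ Fin m)) (a : ℕ → α → C) (b : ℕ → Fin m → C),
    (∀ i, a i ∈ X) ∧ ∀ i j : ℕ, (φ.Realize (Sum.elim (a i) (b j)) ↔ i < j)

variable (L) in
/-- A subset `X` of the home sort is unstable. -/
def UnstableSet₁ (X : Set C) : Prop :=
  ∃ (m : ℕ) (φ : L.Formula (Fin 1 ⊕ Fin m)) (a : ℕ → C) (b : ℕ → Fin m → C),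
    (∀ i, a i ∈ X) ∧ ∀ i j : ℕ, (φ.Realize (Sum.elim (fun _ => a i) (b j)) ↔ i < j)

variable (L) in
/-- `a` is in the model-theoretic algebraic closure of `A`. -/
def InAcl (A : Set C) (a : C) : Prop :=
  ∃ (m : ℕ) (φ : L.Formula (Fin m ⊕ Fin 1)) (b : Fin m → C), (∀ i, b i ∈ A) ∧
    Sat φ b (fun _ => a) ∧ {x : C | Sat φ b (fun _ : Fin 1 => x)}.Finite

variable (L) in
/-- The tuple `a` is algebraic over the parameter set `A`: it satisfies a formula over `A`
with only finitely many solutions. -/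
def TupAlgOver (A : Set C) {α : Type} (a : α → C) : Prop :=
  ∃ (m : ℕ) (φ : L.Formula (Fin m ⊕ α)) (b : Fin m → C), (∀ i, b i ∈ A) ∧
    Sat φ b a ∧ {v : α → C | Sat φ b v}.Finite

variable (L C) in
/-- The structure eliminates the quantifier `∃^∞`: for each formula there is a bound `K`
such that any instance with more than `K` solutions has infinitely many. -/
def ElimInf : Prop :=
  ∀ (m r : ℕ) (φ : L.Formula (Fin m ⊕ Fin r)), ∃ K : ℕ,
    ∀ b : Fin m → C, {v : Fin r → C | Sat φ b v}.Infinite ∨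
      {v : Fin r → C | Sat φ b v}.ncard ≤ K

variable (L C) in
/-- `C` is `κ`-saturated: every finitely satisfiable collection of formulas in one free
variable with parameters from a set of cardinality `< κ` is realized in `C`. -/
def IsSaturatedIn (κ : Cardinal.{u}) : Prop :=
  ∀ A : Set C, #A < κ →
    ∀ p : Set (Σ m : ℕ, L.Formula (Fin m ⊕ Fin 1) × (Fin m → C)),
      (∀ f ∈ p, ∀ i, f.2.2 i ∈ A) →
      (∀ s ⊆ p, s.Finite → ∃ x : C, ∀ f ∈ s, Sat f.2.1 f.2.2 (fun _ : Fin 1 => x)) →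
      ∃ x : C, ∀ f ∈ p, Sat f.2.1 f.2.2 (fun _ : Fin 1 => x)

variable (L C) in
/-- `C` is strongly `κ`-homogeneous: every elementary self-map defined on a set of
cardinality `< κ` extends to an automorphism. -/
def IsStronglyHomogeneousIn (κ : Cardinal.{u}) : Prop :=
  ∀ A : Set C, #A < κ → ∀ f : C → C,
    (∀ (r : ℕ) (φ : L.Formula (Fin r)) (v : Fin r → C), Set.range v ⊆ A →
      (φ.Realize v ↔ φ.Realize (f ∘ v))) →
    ∃ σ : C ≃[L] C, ∀ x ∈ A, σ x = f x

variable (L C) in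
/-- `C` is a monster model: saturated and strongly homogeneous in its own cardinality. -/
def IsMonster : Prop :=
  IsSaturatedIn L C #C ∧ IsStronglyHomogeneousIn L C #C

variable (L) in
/-- A map between two `L`-structures is elementary. -/
def IsElemMap {N : Type u} [L.Structure N] (g : C → N) : Prop :=
  ∀ (r : ℕ) (φ : L.Formula (Fin r)) (v : Fin r → C), (φ.Realize v ↔ φ.Realize (g ∘ v))

end Logic

/-! ### Types as sets of formulas with parameters -/

variable (L : FirstOrder.Language.{v, w}) (C : Type u) in
/-- A formula in `r` free variables with a tuple of parameters from `C`. -/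
def FP (r : ℕ) : Type _ :=
  Σ m : ℕ, L.Formula (Fin m ⊕ Fin r) × (Fin m → C)

section Types

variable {L : FirstOrder.Language.{v, w}} {C : Type u} [L.Structure C] {r : ℕ}

/-- The tuple `v` realizes the formula-with-parameters `f`. -/
def RealizesFP (f : FP L C r) (v : Fin r → C) : Prop :=
  Sat f.2.1 f.2.2 v

/-- All parameters of all formulas in `p` lie in `A`. -/
def ParamsIn (A : Set C) (p : Set (FP L C r)) : Prop :=
  ∀ f ∈ p, ∀ i, f.2.2 i ∈ A

/-- `p` is finitely satisfiable (in `C`). -/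
def FinitelySat (p : Set (FP L C r)) : Prop :=
  ∀ s ⊆ p, s.Finite → ∃ v : Fin r → C, ∀ f ∈ s, RealizesFP f v

/-- `p` is a complete type over the parameter set `A` (consistency being witnessed by finite
satisfiability in the model). -/
def CompleteOver (A : Set C) (p : Set (FP L C r)) : Prop :=
  ParamsIn A p ∧ FinitelySat p ∧
    ∀ (m : ℕ) (φ : L.Formula (Fin m ⊕ Fin r)) (b : Fin m → C), (∀ i, b i ∈ A) →
      ((⟨m, φ, b⟩ : FP L C r) ∈ p ∨ (⟨m, φ.not, b⟩ : FP L C r) ∈ p)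

end Types

/-! ### O-minimality -/

variable (L : FirstOrder.Language.{v, w}) (M : Type u) [L.Structure M] [LinearOrder M] in
/-- `M` is an o-minimal `L`-structure: the underlying order is dense, definable, and every
definable subset of `M` (with parameters) is a finite union of points and open intervals. -/
def IsOMinimal : Prop :=
  DenselyOrdered M ∧
    Set.Definable (∅ : Set M) L {v : Fin 2 → M | v 0 < v 1} ∧
    ∀ s : Set M, Set.Definable₁ (Set.univ : Set M) L s → FinUnionPtsIntervals s

section OMin

variable {L : FirstOrder.Language.{v, w}} {M : Type u} [L.Structure M] [LinearOrder M]

variable (L) (M) in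
/-- `M` eliminates imaginaries: every definable equivalence relation on a power of `M` is the
kernel of a definable map into a power of `M`. -/
def ElimImaginaries : Prop :=
  ∀ (k : ℕ) (E : (Fin k → M) → (Fin k → M) → Prop),
    Set.Definable (Set.univ : Set M) L
      {v : Fin 2 × Fin k → M | E (fun j => v (0, j)) (fun j => v (1, j))} →
    (∀ x, E x x) → (∀ x y, E x y → E y x) → (∀ x y z, E x y → E y z → E x z) →
    ∃ (m : ℕ) (f : (Fin k → M) → (Fin m → M)),
      Set.Definable (Set.univ : Set M) L
        {v : Fin k ⊕ Fin m → M | f (fun j => v (Sum.inl j)) = fun j => v (Sum.inr j)} ∧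
      ∀ x y, (E x y ↔ f x = f y)

variable (L) in
/-- `TupDimEq a A n` : the dimension of `tp_M(a/A)` is `n`, i.e. `n` is the minimum of the
dimensions of the `A`-definable sets to which `a` belongs. -/
def TupDimEq {ι : Type} (a : ι → M) (A : Set M) (n : ℕ) : Prop :=
  (∃ Y : Set (ι → M), Set.Definable A L Y ∧ a ∈ Y ∧ DimEq Y n) ∧
    ∀ (Y : Set (ι → M)) (m : ℕ), Set.Definable A L Y → a ∈ Y → DimEq Y m → n ≤ m

variable (L) in
/-- `a` is a generic point of `Y` over `A`: `a ∈ Y` and `dim(a/A) = dim Y`. -/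
def GenericIn {ι : Type} (a : ι → M) (Y : Set (ι → M)) (A : Set M) : Prop :=
  a ∈ Y ∧ ∃ n : ℕ, DimEq Y n ∧ TupDimEq L a A n

end OMin

/-! ### Quasi-orders and o-minimal quotients -/

section Quasi

variable {P : Type u}

/-- The strict relation associated with a quasi order. -/
def QuasiLT (r : P → P → Prop) (x y : P) : Prop := r x y ∧ ¬ r y x

/-- `t` is (inside `X`) a class of the equivalence associated with the total quasi order `r`,
or an interval of the induced linear order on the quotient. -/
def IsClassOrIntervalIn (X : Set P) (r : P → P → Prop) (t : Set P) : Prop :=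
  (∃ a ∈ X, t = {y ∈ X | r a y ∧ r y a}) ∨
    (∃ a ∈ X, ∃ b ∈ X, t = {y ∈ X | QuasiLT r a y ∧ QuasiLT r y b}) ∨
    (∃ a ∈ X, t = {y ∈ X | QuasiLT r y a}) ∨
    (∃ a ∈ X, t = {y ∈ X | QuasiLT r a y}) ∨ t = X

/-- `S` is a finite union of classes and intervals of the quotient linear order. -/
def FinUnionClassesIntervals (X : Set P) (r : P → P → Prop) (S : Set P) : Prop :=
  ∃ F : Set (Set P), F.Finite ∧ (∀ t ∈ F, IsClassOrIntervalIn X r t) ∧ S = ⋃₀ F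

/-- `r` is a total quasi order on `X` (so that it induces a linear order on the quotient
of `X` by the equivalence relation `r x y ∧ r y x`). -/
def IsTotalQuasiOrderOn (X : Set P) (r : P → P → Prop) : Prop :=
  (∀ x ∈ X, r x x) ∧ (∀ x ∈ X, ∀ y ∈ X, ∀ z ∈ X, r x y → r y z → r x z) ∧
    (∀ x ∈ X, ∀ y ∈ X, r x y ∨ r y x)

/-- The quotient of `X` by the equivalence associated to `r` is infinite. -/
def InfiniteQuotient (X : Set P) (r : P → P → Prop) : Prop :=
  ∃ a : ℕ → P, (∀ i, a i ∈ X) ∧ ∀ i j : ℕ, i ≠ j → ¬ (r (a i) (a j) ∧ r (a j) (a i))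

/-- The linear order induced by `r` on the quotient of `X` is dense. -/
def DenseQuotient (X : Set P) (r : P → P → Prop) : Prop :=
  ∀ x ∈ X, ∀ y ∈ X, QuasiLT r x y → ∃ z ∈ X, QuasiLT r x z ∧ QuasiLT r z y

end Quasi

section FinByOMin

variable (L : FirstOrder.Language.{v, w}) (N : Type u) [L.Structure N]

/-- `X` is finite by o-minimal: there is a definable equivalence relation on `X` with finite
classes and a definable linear order on the quotient (presented as a definable total quasi
order `r` on `X`) such that every definable subset of the quotient (i.e. every definable
invariant subset of `X`) is a finite union of points and intervals. -/
def FinByOMinimal (X : Set N) : Prop :=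
  ∃ r : N → N → Prop,
    Set.Definable (Set.univ : Set N) L {v : Fin 2 → N | r (v 0) (v 1)} ∧
    IsTotalQuasiOrderOn X r ∧
    (∀ x ∈ X, {y ∈ X | r x y ∧ r y x}.Finite) ∧
    ∀ S : Set N, S ⊆ X → Set.Definable₁ (Set.univ : Set N) L S →
      (∀ x ∈ S, ∀ y ∈ X, r x y → r y x → y ∈ S) → FinUnionClassesIntervals X r S

/-- `N` interprets an infinite o-minimal structure: the quotient of a definable set `D` of
tuples by a definable equivalence relation, equipped with a definable dense linear order,
such that every definable subset of the quotient is a finite union of points and intervals. -/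
def InterpretsOMinimalSet : Prop :=
  ∃ (k : ℕ) (D : Set (Fin k → N)) (r : (Fin k → N) → (Fin k → N) → Prop),
    Set.Definable (Set.univ : Set N) L D ∧
    Set.Definable (Set.univ : Set N) L
      {v : Fin 2 × Fin k → N | r (fun j => v (0, j)) (fun j => v (1, j))} ∧
    IsTotalQuasiOrderOn D r ∧ InfiniteQuotient D r ∧ DenseQuotient D r ∧
    ∀ S : Set (Fin k → N), S ⊆ D → Set.Definable (Set.univ : Set N) L S →
      (∀ x ∈ S, ∀ y ∈ D, r x y → r y x → y ∈ S) → FinUnionClassesIntervals D r S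

end FinByOMin





/-! ### Structures definable or interpretable in another structure -/

section Interp

variable (L : FirstOrder.Language.{v, w}) (M : Type u) [L.Structure M]
variable (L' : FirstOrder.Language.{x, x})

/-- The `L'`-structure on the subtype `↥D` (for `D` an `M`-definable set of `k`-tuples) is
definable in `M` over the parameter set `A`: the domain, all primitive relations and the
graphs of all primitive functions are `A`-definable in `M`. -/
def StructureDefinableInOver {k : ℕ} (D : Set (Fin k → M)) [L'.Structure ↥D] (A : Set M) : Prop :=
  Set.Definable A L D ∧
    (∀ (n : ℕ) (R : L'.Relations n), Set.Definable A L
      {v : Fin n × Fin k → M | ∃ w : Fin n → ↥D,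
        (∀ i, ((w i : Fin k → M)) = fun j => v (i, j)) ∧ Structure.RelMap R w}) ∧
    (∀ (n : ℕ) (f : L'.Functions n), Set.Definable A L
      {v : (Fin n ⊕ Unit) × Fin k → M | ∃ (w : Fin n → ↥D) (z : ↥D),
        (∀ i, ((w i : Fin k → M)) = fun j => v (Sum.inl i, j)) ∧
        ((z : Fin k → M) = fun j => v (Sum.inr (), j)) ∧ Structure.funMap f w = z})

/-- The `L'`-structure on `↥D` is definable (with parameters) in `M`. -/
def StructureDefinableIn {k : ℕ} (D : Set (Fin k → M)) [L'.Structure ↥D] : Prop :=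
  StructureDefinableInOver L M L' D (Set.univ : Set M)

/-- The `L'`-structure `N` is interpretable in `M` via the definable set `S ⊆ M^k` and the
map `π` (which is surjective onto `N` from `S` and whose fiber equivalence relation on `S`
is definable): all primitive relations and graphs of primitive functions of `N` pull back
to definable sets. -/
def StructureInterpretableVia (N : Type x) [L'.Structure N] {k : ℕ}
    (S : Set (Fin k → M)) (π : (Fin k → M) → N) : Prop :=
  Set.Definable (Set.univ : Set M) L S ∧
    (∀ y : N, ∃ v ∈ S, π v = y) ∧
    Set.Definable (Set.univ : Set M) L
      {v : Fin 2 × Fin k → M | (fun j => v (0, j)) ∈ S ∧ (fun j => v (1, j)) ∈ S ∧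
        π (fun j => v (0, j)) = π (fun j => v (1, j))} ∧
    (∀ (n : ℕ) (R : L'.Relations n), Set.Definable (Set.univ : Set M) L
      {v : Fin n × Fin k → M | (∀ i, (fun j => v (i, j)) ∈ S) ∧
        Structure.RelMap R (fun i => π (fun j => v (i, j)))}) ∧
    (∀ (n : ℕ) (f : L'.Functions n), Set.Definable (Set.univ : Set M) L
      {v : (Fin n ⊕ Unit) × Fin k → M | (∀ i, (fun j => v (Sum.inl i, j)) ∈ S) ∧
        (fun j => v (Sum.inr (), j)) ∈ S ∧
        π (fun j => v (Sum.inr (), j)) =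
          Structure.funMap f (fun i => π (fun j => v (Sum.inl i, j)))})

end Interp

/-! ### The language of one binary relation -/

/-- The `Language.order`-structure on `P` in which the relation symbol is interpreted
by an arbitrary binary relation `r`. -/
def relStr {P : Type u} (r : P → P → Prop) : Language.order.Structure P :=
  @orderStructure P ⟨r⟩

/-- The structures `(P, r₁)` and `(P, r₂)` (in the language of one binary relation) are
elementarily equivalent. -/
def ElemEquivRel {P : Type u} (r₁ r₂ : P → P → Prop) : Prop :=
  ∀ φ : Language.order.Sentence,
    (@Sentence.Realize _ P (relStr r₁) φ ↔ @Sentence.Realize _ P (relStr r₂) φ)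

/-- A subset `s` of `P` is definable (with parameters from `A`) in the structure `(P, r)`
with one binary relation `r`. -/
def DefinableInRel {P : Type u} (r : P → P → Prop) (A : Set P) (s : Set P) : Prop :=
  @Set.Definable₁ P A Language.order (relStr r) s

/-- A set of `α`-tuples of `P` is definable (with parameters from `A`) in `(P, r)`. -/
def DefinableInRel' {P : Type u} (r : P → P → Prop) (A : Set P) {α : Type}
    (s : Set (α → P)) : Prop :=
  @Set.Definable P A Language.order (relStr r) α s

/-! ### Dividing, forking and U-rank -/

section Forking

variable (L : FirstOrder.Language.{v, w}) {C : Type u} [L.Structure C]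

/-- The sequence of `β`-tuples `bs` is indiscernible over the parameter set `A`. -/
def IndiscOver (A : Set C) {β : Type} (bs : ℕ → β → C) : Prop :=
  ∀ (q : ℕ) (i j : Fin q → ℕ), StrictMono i → StrictMono j →
    EqTpOn L A (fun p : Fin q × β => bs (i p.1) p.2) (fun p : Fin q × β => bs (j p.1) p.2)

variable {L} in
/-- The family of instances `φ(x; bs i)` is `k`-inconsistent. -/
def KInconsistent {m : ℕ} {α : Type} (φ : L.Formula (Fin m ⊕ α)) (bs : ℕ → Fin m → C)
    (k : ℕ) : Prop :=
  ∀ s : Fin k → ℕ, Function.Injective s → ¬ ∃ v : α → C, ∀ j, Sat φ (bs (s j)) v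

variable {L} in
/-- The formula `φ(x; b)` divides over `A`. -/
def FDivides {m : ℕ} {α : Type} (φ : L.Formula (Fin m ⊕ α)) (b : Fin m → C)
    (A : Set C) : Prop :=
  ∃ (k : ℕ) (bs : ℕ → Fin m → C), bs 0 = b ∧ IndiscOver L A bs ∧ KInconsistent φ bs k

variable {L} in
/-- The formula `φ(x; b)` forks over `A`: it implies a finite disjunction of formulas
each dividing over `A`. -/
def FForks {m : ℕ} {α : Type} (φ : L.Formula (Fin m ⊕ α)) (b : Fin m → C)
    (A : Set C) : Prop :=
  ∃ (t : ℕ) (ms : Fin t → ℕ) (ψ : ∀ i, L.Formula (Fin (ms i) ⊕ α)) (d : ∀ i, Fin (ms i) → C),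
    (∀ i, FDivides (ψ i) (d i) A) ∧
    ∀ v : α → C, Sat φ b v → ∃ i, Sat (ψ i) (d i) v

/-- The complete type `tp(a/B)` forks over `A`. -/
def TpForks {α : Type} (a : α → C) (B A : Set C) : Prop :=
  ∃ (m : ℕ) (φ : L.Formula (Fin m ⊕ α)) (b : Fin m → C),
    (∀ i, b i ∈ B) ∧ Sat φ b a ∧ FForks φ b A

/-- `URankGE L a A o` : the U-rank (the foundation rank of forking) of the complete type
`tp(a/A)` is at least `o`. -/
def URankGE {α : Type} (a : α → C) (A : Set C) (o : Ordinal.{u}) : Prop :=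
  WellFounded.fix wellFounded_lt
    (fun (o : Ordinal.{u}) (IH : ∀ o' < o, (α → C) → Set C → Prop) (a : α → C) (A : Set C) =>
      ∀ o' (h : o' < o), ∃ (B : Set C) (a' : α → C), A ⊆ B ∧ EqTpOn L A a a' ∧
        TpForks L a' B A ∧ IH o' h a' B)
    o a A

variable {L} in
/-- The formula `φ(x; b)` strongly divides over `A`: `tp(b/A)` is non-algebraic and the set
of instances of `φ` at realizations of `tp(b/A)` is `k`-inconsistent for some `k`. -/
def StronglyDivides {m : ℕ} {α : Type} (φ : L.Formula (Fin m ⊕ α)) (b : Fin m → C)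
    (A : Set C) : Prop :=
  {b' : Fin m → C | EqTpOn L A b b'}.Infinite ∧
    ∃ k : ℕ, ∀ bs : Fin k → Fin m → C, (∀ j, EqTpOn L A b (bs j)) → Function.Injective bs →
      ¬ ∃ v : α → C, ∀ j, Sat φ (bs j) v

variable {L} in
/-- The formula `φ(x; b)` þ-divides over `A` : it strongly divides over `A ∪ c`
for some tuple `c`. -/
def ThornDivides {m : ℕ} {α : Type} (φ : L.Formula (Fin m ⊕ α)) (b : Fin m → C)
    (A : Set C) : Prop :=
  ∃ (t : ℕ) (c : Fin t → C), StronglyDivides φ b (A ∪ Set.range c)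

variable {L} in
/-- The formula `φ(x; b)` þ-forks over `A`. -/
def ThornForks {m : ℕ} {α : Type} (φ : L.Formula (Fin m ⊕ α)) (b : Fin m → C)
    (A : Set C) : Prop :=
  ∃ (t : ℕ) (ms : Fin t → ℕ) (ψ : ∀ i, L.Formula (Fin (ms i) ⊕ α)) (d : ∀ i, Fin (ms i) → C),
    (∀ i, ThornDivides (ψ i) (d i) A) ∧
    ∀ v : α → C, Sat φ b v → ∃ i, Sat (ψ i) (d i) v

/-- The complete type `tp(a/B)` þ-forks over `A`. -/
def TpThornForks {α : Type} (a : α → C) (B A : Set C) : Prop :=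
  ∃ (m : ℕ) (φ : L.Formula (Fin m ⊕ α)) (b : Fin m → C),
    (∀ i, b i ∈ B) ∧ Sat φ b a ∧ ThornForks φ b A

/-- `UThornRankGE L a A o` : the `U^þ`-rank (the foundation rank of þ-forking) of the
complete type `tp(a/A)` is at least `o`. -/
def UThornRankGE {α : Type} (a : α → C) (A : Set C) (o : Ordinal.{u}) : Prop :=
  WellFounded.fix wellFounded_lt
    (fun (o : Ordinal.{u}) (IH : ∀ o' < o, (α → C) → Set C → Prop) (a : α → C) (A : Set C) =>
      ∀ o' (h : o' < o), ∃ (B : Set C) (a' : α → C), A ⊆ B ∧ EqTpOn L A a a' ∧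
        TpThornForks L a' B A ∧ IH o' h a' B)
    o a A

variable {L} in
/-- `ThornRankGE φ b o` : the þ-rank of the formula `φ(x; b)` is at least `o`. -/
def ThornRankGE {α : Type} {m : ℕ} (φ : L.Formula (Fin m ⊕ α)) (b : Fin m → C)
    (o : Ordinal.{u}) : Prop :=
  WellFounded.fix wellFounded_lt
    (fun (o : Ordinal.{u})
        (IH : ∀ o' < o, ∀ m' : ℕ, L.Formula (Fin m' ⊕ α) → (Fin m' → C) → Prop)
        (m : ℕ) (φ : L.Formula (Fin m ⊕ α)) (b : Fin m → C) =>
      ∀ o' (h : o' < o), ∃ (m' : ℕ) (ψ : L.Formula (Fin m' ⊕ α)) (c : Fin m' → C),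
        (∀ v : α → C, Sat ψ c v → Sat φ b v) ∧ ThornDivides ψ c (Set.range b) ∧
          IH o' h m' ψ c)
    o m φ b

end Forking


/-! ### Lifting sets from an interpreted structure back to the ambient structure -/

section Lift

variable {M : Type u} {k : ℕ} {D : Set (Fin k → M)}

/-- The subset of `M^k` corresponding to a set of elements of `↥D`. -/
def liftSet1 (X : Set ↥D) : Set (Fin k → M) :=
  (fun x : ↥D => (x : Fin k → M)) '' X

/-- The subset of `M^{2k}` corresponding to a binary relation on `↥D`. -/
def liftRel (ρ : ↥D → ↥D → Prop) : Set (Fin 2 × Fin k → M) :=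
  {v | ∃ x y : ↥D, ((x : Fin k → M) = fun j => v (0, j)) ∧
    ((y : Fin k → M) = fun j => v (1, j)) ∧ ρ x y}

/-- The subset of `M^{r·k}` corresponding to a set of `r`-tuples of elements of `↥D`. -/
def liftSetR {r : ℕ} (X : Set (Fin r → ↥D)) : Set (Fin r × Fin k → M) :=
  {v | ∃ w : Fin r → ↥D, (∀ i, ((w i : Fin k → M) = fun j => v (i, j))) ∧ w ∈ X}

end Lift

/-! ### Strongly stable types -/

/-- A complete type `q` (over a set of parameters of the model `N`) is strongly stable:
in no elementary extension of `N` is there a formula defining a quasi order with an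
infinite chain of realizations of a common extension of `q`. -/
def StronglyStable (L' : FirstOrder.Language.{x, x}) (N : Type u) [L'.Structure N]
    (q : Set (FP L' N 1)) : Prop :=
  ∀ (N' : Type u) [L'.Structure N'] (g : N → N'), IsElemMap L' g →
    ∀ (m : ℕ) (φ : L'.Formula (Fin m ⊕ Fin 2)) (c : Fin m → N') (a : ℕ → N'),
      -- every `a i` realizes (the image of) `q` ...
      (∀ i : ℕ, ∀ f ∈ q, Sat f.2.1 (g ∘ f.2.2) (fun _ : Fin 1 => a i)) →
      -- ... and they all realize a common complete type `p' ⊇ q` over the larger parameter set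
      (∀ i j : ℕ, EqTpOn L' (Set.range g ∪ Set.range c)
        (fun _ : Fin 1 => a i) (fun _ : Fin 1 => a j)) →
      -- if `φ(x, y; c)` is a quasi order (transitive), ...
      (∀ x y z : N', Sat φ c ![x, y] → Sat φ c ![y, z] → Sat φ c ![x, z]) →
      -- ... then the `a i` do not form an infinite strictly increasing `φ`-chain
      ¬ ∀ i j : ℕ, i < j → Sat φ c ![a i, a j] ∧ ¬ Sat φ c ![a j, a i]

end OMinPaper
open OMinPaper FirstOrder FirstOrder.Language Set Cardinal

universe u v w

namespace Statement18Aux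
open OMinPaper FirstOrder FirstOrder.Language Set Cardinal

section Omega
variable {L : FirstOrder.Language.{v, w}} {C : Type u} [L.Structure C]

theorem omega_step
    (hsat : IsSaturatedIn L C (#C)) (hC : Infinite C)
    (A0 : Finset C) (mm NN : ℕ → ℕ) (F : ∀ k, L.Formula (Fin (mm k) ⊕ Fin (NN k)))
    (par : ∀ k, Fin (mm k) → C) (hpar : ∀ k i, par k i ∈ A0)
    (n : ℕ) (c : Fin n → C)
    (hc : ∀ K, ∃ e : ℕ → C, (∀ i : Fin n, e i = c i) ∧
      ∀ k < K, (F k).Realize (Sum.elim (par k) (fun i : Fin (NN k) => e i))) :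
    ∃ x : C, ∀ K, ∃ e : ℕ → C, (∀ i : Fin (n+1), e i = (Fin.snoc c x : Fin (n+1) → C) i) ∧
      ∀ k < K, (F k).Realize (Sum.elim (par k) (fun i : Fin (NN k) => e i)) := by
  classical
  obtain ⟨c0⟩ : Nonempty C := inferInstance
  set A0' : Finset C := insert c0 A0 with hA0'
  set m0 : ℕ := A0'.card with hm0
  set eqA : {x // x ∈ A0'} ≃ Fin m0 := A0'.equivFin with heqA
  have hparA : ∀ k i, par k i ∈ A0' := fun k i => Finset.mem_insert_of_mem (hpar k i)
  -- the parameter tuple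
  set P : Fin (m0 + n) → C := fun t =>
    if h : (t : ℕ) < m0 then (eqA.symm ⟨(t : ℕ), h⟩ : C)
    else c ⟨(t : ℕ) - m0, by have := t.isLt; omega⟩ with hP
  have hP1 : ∀ (x : C) (hx : x ∈ A0'), P (Fin.castAdd n (eqA ⟨x, hx⟩)) = x := by
    intro x hx
    have hlt : ((Fin.castAdd n (eqA ⟨x, hx⟩)) : ℕ) < m0 := by
      simpa using (eqA ⟨x, hx⟩).isLt
    simp only [hP]
    rw [dif_pos hlt]
    have h2 : (⟨((Fin.castAdd n (eqA ⟨x, hx⟩)) : ℕ), hlt⟩ : Fin m0) = eqA ⟨x, hx⟩ := by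
      apply Fin.ext; simp
    rw [h2, Equiv.symm_apply_apply]
  have hP2 : ∀ (j : Fin n), P (Fin.natAdd m0 j) = c j := by
    intro j
    have hnlt : ¬ (((Fin.natAdd m0 j) : ℕ) < m0) := by simp
    simp only [hP]
    rw [dif_neg hnlt]
    congr 1
    apply Fin.ext
    simp
  -- the per-K data
  set MK : ℕ → ℕ := fun K => max (n+1) ((Finset.range K).sup NN) with hMK
  have hMKn : ∀ K, n + 1 ≤ MK K := fun K => le_max_left _ _
  have hNK : ∀ {k K : ℕ}, k < K → NN k ≤ MK K := fun {k K} hk =>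
    le_max_of_le_right (Finset.le_sup (Finset.mem_range.2 hk))
  set conj : ∀ K : ℕ, ℕ → L.BoundedFormula ((Fin (m0+n)) ⊕ Fin 1) ((MK K - (n+1)) + 0) :=
    fun K k =>
      if h : k < K then
        BoundedFormula.relabel (Sum.elim
          (fun i => Sum.inl (Sum.inl (Fin.castAdd n (eqA ⟨par k i, hparA k i⟩))))
          (fun i : Fin (NN k) =>
            if hi : (i : ℕ) < n then Sum.inl (Sum.inl (Fin.natAdd m0 ⟨(i : ℕ), hi⟩))
            else if hi2 : (i : ℕ) = n then Sum.inl (Sum.inr 0)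
            else Sum.inr (⟨(i : ℕ) - (n+1),
              by have h1 := i.isLt; have h2 := hNK h; omega⟩ : Fin (MK K - (n+1)))))
          (F k)
      else ⊤ with hconjdef
  set Ψ : ℕ → L.Formula ((Fin (m0+n)) ⊕ Fin 1) :=
    fun K => (finIInf (Finset.range K) (conj K)).exs with hΨ
  -- key realization lemma
  have hconj : ∀ (K k : ℕ) (hk : k < K) (x : C) (xs : Fin ((MK K - (n+1)) + 0) → C)
      (e : ℕ → C),
      (∀ i : Fin n, e i = c i) → e n = x →
      (∀ t : Fin ((MK K - (n+1)) + 0), e (n + 1 + (t : ℕ)) = xs t) →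
      ((conj K k).Realize (Sum.elim P (fun _ : Fin 1 => x)) xs ↔
        (F k).Realize (Sum.elim (par k) (fun i : Fin (NN k) => e i))) := by
    intro K k hk x xs e he1 he2 he3
    simp only [hconjdef]
    rw [dif_pos hk]
    rw [BoundedFormula.realize_relabel]
    have hass : (Sum.elim (Sum.elim P (fun _ : Fin 1 => x)) (xs ∘ Fin.castAdd 0)) ∘
        (Sum.elim
          (fun i => Sum.inl (Sum.inl (Fin.castAdd n (eqA ⟨par k i, hparA k i⟩))))
          (fun i : Fin (NN k) =>
            if hi : (i : ℕ) < n then Sum.inl (Sum.inl (Fin.natAdd m0 ⟨(i : ℕ), hi⟩))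
            else if hi2 : (i : ℕ) = n then Sum.inl (Sum.inr 0)
            else Sum.inr (⟨(i : ℕ) - (n+1),
              by have h1 := i.isLt; have h2 := hNK hk; omega⟩ : Fin (MK K - (n+1))))) =
        Sum.elim (par k) (fun i : Fin (NN k) => e i) := by
      funext z
      rcases z with i | i
      · simp only [Function.comp_apply, Sum.elim_inl]
        exact hP1 _ _
      · simp only [Function.comp_apply, Sum.elim_inr]
        by_cases hi : (i : ℕ) < n
        · rw [dif_pos hi]
          simp only [Sum.elim_inl]
          rw [hP2]
          exact (he1 ⟨(i : ℕ), hi⟩).symm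
        · by_cases hi2 : (i : ℕ) = n
          · rw [dif_neg hi, dif_pos hi2]
            simp only [Sum.elim_inl, Sum.elim_inr]
            rw [hi2, he2]
          · rw [dif_neg hi, dif_neg hi2]
            simp only [Sum.elim_inr, Function.comp_apply]
            rw [← he3 (Fin.castAdd 0 (⟨(i : ℕ) - (n+1),
              by have h1 := i.isLt; have h2 := hNK hk; omega⟩ : Fin (MK K - (n+1))))]
            congr 1
            simp only [Fin.coe_castAdd]
            omega
    rw [hass]
    have hxs0 : xs ∘ Fin.natAdd (MK K - (n+1)) = default := by
      funext t; exact t.elim0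
    rw [hxs0]
    exact Iff.rfl
  -- the saturation call
  set packK : ℕ → (Σ m : ℕ, L.Formula (Fin m ⊕ Fin 1) × (Fin m → C)) :=
    fun K => ⟨m0 + n, Ψ K, P⟩ with hpack
  set A : Set C := ↑A0' ∪ Set.range c with hA
  have hAfin : A.Finite := (A0'.finite_toSet).union (Set.finite_range c)
  have hAcard : #A < #C := lt_of_lt_of_le hAfin.lt_aleph0 (Cardinal.infinite_iff.1 hC)
  have hPmem : ∀ i : Fin (m0 + n), P i ∈ A := by
    intro i
    simp only [hP]
    by_cases h : (i : ℕ) < m0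
    · rw [dif_pos h]
      exact Or.inl (eqA.symm ⟨(i : ℕ), h⟩).2
    · rw [dif_neg h]
      exact Or.inr ⟨_, rfl⟩
  have hparams : ∀ f ∈ Set.range packK, ∀ i, f.2.2 i ∈ A := by
    rintro f ⟨K, rfl⟩ i
    exact hPmem i
  have hfs : ∀ s ⊆ Set.range packK, s.Finite →
      ∃ x : C, ∀ f ∈ s, Sat f.2.1 f.2.2 (fun _ : Fin 1 => x) := by
    intro s hs hsfin
    set g : (Σ m : ℕ, L.Formula (Fin m ⊕ Fin 1) × (Fin m → C)) → ℕ :=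
      fun f => if h : ∃ K, packK K = f then h.choose else 0 with hg
    set Kb : ℕ := (hsfin.toFinset.sup g) + 1 with hKb
    obtain ⟨e, he1, he2⟩ := hc Kb
    refine ⟨e n, ?_⟩
    intro f hf
    have hex : ∃ K, packK K = f := hs hf
    have hgf : packK (g f) = f := by
      simp only [hg]
      rw [dif_pos hex]
      exact hex.choose_spec
    have hKlt : g f < Kb := by
      rw [hKb]
      exact Nat.lt_succ_of_le (Finset.le_sup (hsfin.mem_toFinset.2 hf))
    rw [← hgf]
    show (Ψ (g f)).Realize (Sum.elim P (fun _ : Fin 1 => e n))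
    simp only [hΨ]
    rw [BoundedFormula.realize_exs]
    refine ⟨fun t => e (n + 1 + (t : ℕ)), ?_⟩
    rw [realize_finIInf]
    intro k hkmem
    have hk : k < g f := Finset.mem_range.1 hkmem
    exact (hconj (g f) k hk (e n) _ e he1 rfl (fun t => rfl)).mpr
      (he2 k (lt_trans hk hKlt))
  obtain ⟨x, hx⟩ := hsat A hAcard (Set.range packK) hparams hfs
  refine ⟨x, ?_⟩
  intro K
  have hxK := hx (packK K) ⟨K, rfl⟩
  replace hxK : (Ψ K).Realize (Sum.elim P (fun _ : Fin 1 => x)) := hxK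
  simp only [hΨ] at hxK
  rw [BoundedFormula.realize_exs] at hxK
  obtain ⟨xs, hxs⟩ := hxK
  rw [realize_finIInf] at hxs
  set e : ℕ → C := fun i =>
    if h : i < n then c ⟨i, h⟩
    else if h2 : i = n then x
    else if h3 : i - (n+1) < (MK K - (n+1)) + 0 then xs ⟨i - (n+1), h3⟩
    else c0 with he
  have he_lt : ∀ (i : ℕ) (h : i < n), e i = c ⟨i, h⟩ := by
    intro i h
    simp only [he]
    rw [dif_pos h]
  have he_n : e n = x := by
    simp only [he]
    simp
  have he_t : ∀ t : Fin ((MK K - (n+1)) + 0), e (n + 1 + (t : ℕ)) = xs t := by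
    intro t
    simp only [he]
    rw [dif_neg (by omega : ¬ (n + 1 + (t : ℕ) < n)),
      dif_neg (by omega : ¬ (n + 1 + (t : ℕ) = n)),
      dif_pos (by have := t.isLt; omega : n + 1 + (t : ℕ) - (n+1) < (MK K - (n+1)) + 0)]
    congr 1
    apply Fin.ext
    simp only []
    omega
  refine ⟨e, ?_, ?_⟩
  · intro i
    refine Fin.lastCases ?_ ?_ i
    · rw [Fin.snoc_last, Fin.val_last]
      exact he_n
    · intro j
      rw [Fin.snoc_castSucc, Fin.coe_castSucc]
      exact he_lt j j.isLt
  · intro k hk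
    exact (hconj K k hk x xs e (fun i => he_lt i i.isLt) he_n he_t).mp
      (hxs k (Finset.mem_range.2 hk))

theorem omega_realize
    (hsat : IsSaturatedIn L C (#C)) (hC : Infinite C)
    (A0 : Finset C) (mm NN : ℕ → ℕ) (F : ∀ k, L.Formula (Fin (mm k) ⊕ Fin (NN k)))
    (par : ∀ k, Fin (mm k) → C) (hpar : ∀ k i, par k i ∈ A0)
    (hfin : ∀ K : ℕ, ∃ e : ℕ → C, ∀ k < K,
      (F k).Realize (Sum.elim (par k) (fun i : Fin (NN k) => e i))) :
    ∃ e : ℕ → C, ∀ k, (F k).Realize (Sum.elim (par k) (fun i : Fin (NN k) => e i)) := by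
  classical
  let Inv : ∀ n : ℕ, (Fin n → C) → Prop := fun n c =>
    ∀ K, ∃ e : ℕ → C, (∀ i : Fin n, e i = c i) ∧
      ∀ k < K, (F k).Realize (Sum.elim (par k) (fun i : Fin (NN k) => e i))
  have base : Inv 0 (fun i => i.elim0) :=
    fun K => (hfin K).imp (fun e he => ⟨fun i => i.elim0, he⟩)
  have step : ∀ (n : ℕ) (c : Fin n → C), Inv n c → ∃ x : C, Inv (n+1) (Fin.snoc c x) := by
    intro n c hcinv
    obtain ⟨x, hx⟩ := omega_step hsat hC A0 mm NN F par hpar n c hcinv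
    refine ⟨x, ?_⟩
    intro K
    obtain ⟨e, he1, he2⟩ := hx K
    exact ⟨e, he1, he2⟩
  let St : ∀ n : ℕ, {c : Fin n → C // Inv n c} := fun n =>
    Nat.rec ⟨fun i => i.elim0, base⟩
      (fun n ih => ⟨Fin.snoc ih.1 (step n ih.1 ih.2).choose,
        (step n ih.1 ih.2).choose_spec⟩) n
  have hcoh : ∀ n : ℕ, (St (n+1)).1 = Fin.snoc (St n).1 ((step n (St n).1 (St n).2).choose) :=
    fun n => rfl
  let e : ℕ → C := fun i => (St (i+1)).1 (Fin.last i)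
  have agree : ∀ (n : ℕ) (i : Fin n), e i = (St n).1 i := by
    intro n
    induction n with
    | zero => exact fun i => i.elim0
    | succ n ih =>
      intro i
      refine Fin.lastCases ?_ ?_ i
      · show e ((Fin.last n : Fin (n+1)) : ℕ) = _
        rw [Fin.val_last]
      · intro j
        rw [hcoh n, Fin.snoc_castSucc, Fin.coe_castSucc]
        exact ih j
  refine ⟨e, ?_⟩
  intro k
  obtain ⟨e', he1, he2⟩ := (St (NN k)).2 (k+1)
  have : (fun i : Fin (NN k) => e i) = fun i : Fin (NN k) => e' i := by
    funext i
    rw [agree (NN k) i, ← he1 i]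
  rw [this]
  exact he2 k (Nat.lt_succ_self k)

end Omega

section Main
variable {L : FirstOrder.Language.{v, w}} {C : Type u} [L.Structure C]

/-- Realization of a formula only depends on the free variables. -/
theorem realize_congr_fv {γ : Type*} [DecidableEq γ] {φ : L.Formula γ} {v w : γ → C}
    (h : ∀ x ∈ φ.freeVarFinset, v x = w x) : φ.Realize v ↔ φ.Realize w := by
  have hs : ↑φ.freeVarFinset ⊆ (↑φ.freeVarFinset : Set γ) := Set.Subset.rfl
  have h1 := BoundedFormula.realize_restrictFreeVar' (M := C) hs (v := v) (xs := default)
  have h2 := BoundedFormula.realize_restrictFreeVar' (M := C) hs (v := w) (xs := default)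
  have hvw : (v ∘ (Subtype.val : (↑φ.freeVarFinset : Set γ) → γ)) = w ∘ Subtype.val := by
    funext x
    exact h x (by exact_mod_cast x.2)
  rw [Formula.Realize, ← h1, Formula.Realize, ← h2, hvw]

theorem statement_18'
    (hsat : IsSaturatedIn L C (#C))
    {α β : Type} (φ : L.Formula (α ⊕ β)) (b : β → C)
    (hstable : ¬ UnstableSet L {v : α → C | φ.Realize (Sum.elim v b)}) :
    ∃ θ : L.Formula β, θ.Realize b ∧
      ¬ FormulaHasOP (C := C) (φ ⊓ θ.relabel Sum.inr) := by
  classical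
  by_contra hcontra
  push_neg at hcontra
  -- `hcontra : ∀ θ, θ.Realize b → FormulaHasOP (φ ⊓ θ.relabel Sum.inr)`
  set Fv : Finset (α ⊕ β) := φ.freeVarFinset with hFv
  set Fa : Finset α := Fv.preimage Sum.inl Sum.inl_injective.injOn with hFa
  set Fb : Finset β := Fv.preimage Sum.inr Sum.inr_injective.injOn with hFb
  -- CASE 1 : only finitely many `Fa`-patterns; then `⊤` works.
  by_cases hF : Finite ({x // x ∈ Fa} → C)
  · have hOP := hcontra ⊤ (by simp)
    obtain ⟨a, bb, hab⟩ := hOP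
    have key : ∀ i i' : ℕ, i < i' →
        (fun x : {x // x ∈ Fa} => a i (x : α)) = (fun x : {x // x ∈ Fa} => a i' (x : α)) → False := by
      intro i i' hlt heq
      have h1 := (hab i i').mpr hlt
      have h2 := hab i' i'
      rw [Formula.realize_inf] at h1 h2
      have hiff : φ.Realize (Sum.elim (a i) (bb i')) ↔ φ.Realize (Sum.elim (a i') (bb i')) := by
        apply realize_congr_fv
        intro z hz
        rcases z with x | y
        · have hx : x ∈ Fa := by rw [hFa]; exact Finset.mem_preimage.2 hz
          exact congrFun heq ⟨x, hx⟩
        · rfl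
      have htop : ∀ i j : ℕ, ((⊤ : L.Formula β).relabel Sum.inr).Realize
          (Sum.elim (a i) (bb j)) := by
        intro i j
        rw [Formula.realize_relabel]
        simp
      exact (lt_irrefl i') (h2.mp ⟨hiff.mp h1.1, htop i' i'⟩)
    obtain ⟨i, i', hne, heq⟩ := Finite.exists_ne_map_eq_of_infinite
      (fun i : ℕ => (fun x : {x // x ∈ Fa} => a i (x : α)))
    rcases Ne.lt_or_gt hne with h | h
    · exact key i i' h heq
    · exact key i' i h heq.symm
  -- CASE 2 : main case.
  rw [not_finite_iff_infinite] at hF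
  have hCinf : Infinite C := by
    by_contra hni
    rw [not_infinite_iff_finite] at hni
    exact hF.not_finite (by infer_instance)
  obtain ⟨c0⟩ : Nonempty C := inferInstance
  set s : ℕ := Fa.card + Fb.card + 1 with hs
  have hspos : 0 < s := by omega
  -- slot maps
  set ga : ℕ → α → ℕ := fun i x =>
    if h : x ∈ Fa then s * i + (1 + (Fa.equivFin ⟨x, h⟩ : ℕ)) else 0 with hga
  set gb : ℕ → β → ℕ := fun j y =>
    if h : y ∈ Fb then s * j + (1 + Fa.card + (Fb.equivFin ⟨y, h⟩ : ℕ)) else 0 with hgb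
  have ga_lt : ∀ {i m : ℕ} (x : α), i < m → ga i x < s * m := by
    intro i m x him
    simp only [hga]
    by_cases h : x ∈ Fa
    · rw [dif_pos h]
      have h1 : (Fa.equivFin ⟨x, h⟩ : ℕ) < Fa.card := (Fa.equivFin ⟨x, h⟩).isLt
      have h2 : s * i + s ≤ s * m := by
        have : s * (i + 1) ≤ s * m := Nat.mul_le_mul_left s (by omega)
        calc s * i + s = s * (i + 1) := (Nat.mul_succ s i).symm
        _ ≤ s * m := this
      omega
    · rw [dif_neg h]
      exact Nat.mul_pos hspos (by omega)
  have gb_lt : ∀ {j m : ℕ} (y : β), j < m → gb j y < s * m := by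
    intro j m y hjm
    simp only [hgb]
    by_cases h : y ∈ Fb
    · rw [dif_pos h]
      have h1 : (Fb.equivFin ⟨y, h⟩ : ℕ) < Fb.card := (Fb.equivFin ⟨y, h⟩).isLt
      have h2 : s * j + s ≤ s * m := by
        have : s * (j + 1) ≤ s * m := Nat.mul_le_mul_left s (by omega)
        calc s * j + s = s * (j + 1) := (Nat.mul_succ s j).symm
        _ ≤ s * m := this
      omega
    · rw [dif_neg h]
      exact Nat.mul_pos hspos (by omega)
  set q : ℕ := Fb.card with hq
  set ib : β → Fin (q+1) := fun y =>
    if h : y ∈ Fb then (Fb.equivFin ⟨y, h⟩).castSucc else Fin.last q with hib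
  set B1 : Fin (q+1) → C := fun t =>
    if h : (t : ℕ) < q then b ((Fb.equivFin.symm ⟨(t : ℕ), h⟩ : β)) else c0 with hB1
  have hB1b : ∀ (y : β) (h : y ∈ Fb), B1 (ib y) = b y := by
    intro y h
    have hiby : ib y = (Fb.equivFin ⟨y, h⟩).castSucc := by
      simp only [hib]; rw [dif_pos h]
    rw [hiby]
    have hc : (((Fb.equivFin ⟨y, h⟩).castSucc : Fin (q+1)) : ℕ) < q := by
      exact (Fb.equivFin ⟨y, h⟩).isLt
    simp only [hB1]
    rw [dif_pos hc]
    have heq2 : (⟨(((Fb.equivFin ⟨y, h⟩).castSucc : Fin (q+1)) : ℕ), hc⟩ : Fin q)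
        = Fb.equivFin ⟨y, h⟩ := by
      apply Fin.ext; simp
    rw [heq2, Equiv.symm_apply_apply]
  -- the two kinds of constraint formulas
  set rel1 : ∀ i j : ℕ, L.Formula (Fin 0 ⊕ Fin (s * (max i j + 1))) := fun i j =>
    φ.relabel (Sum.elim (fun x => Sum.inr (⟨ga i x, ga_lt x (by omega)⟩ : Fin (s * (max i j + 1))))
      (fun y => Sum.inr ⟨gb j y, gb_lt y (by omega)⟩)) with hrel1
  set rel2 : ∀ i : ℕ, L.Formula (Fin (q+1) ⊕ Fin (s * (i + 1))) := fun i =>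
    φ.relabel (Sum.elim (fun x => Sum.inr (⟨ga i x, ga_lt x (by omega)⟩ : Fin (s * (i + 1))))
      (fun y => Sum.inl (ib y))) with hrel2
  have con1_iff : ∀ (i j : ℕ) (e : ℕ → C),
      ((if j ≤ i then rel1 i j else (rel1 i j).not).Realize
        (Sum.elim (Fin.elim0 : Fin 0 → C) (fun t : Fin (s * (max i j + 1)) => e (t : ℕ)))
        ↔ (φ.Realize (Sum.elim (fun x => e (ga i x)) (fun y => e (gb j y))) ↔ j ≤ i)) := by
    intro i j e
    have hbase : (rel1 i j).Realize
        (Sum.elim (Fin.elim0 : Fin 0 → C) (fun t : Fin (s * (max i j + 1)) => e (t : ℕ)))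
        ↔ φ.Realize (Sum.elim (fun x => e (ga i x)) (fun y => e (gb j y))) := by
      simp only [hrel1]
      rw [Formula.realize_relabel]
      apply Iff.of_eq
      congr 1
      funext z
      rcases z with x | y <;> rfl
    by_cases hj : j ≤ i
    · rw [if_pos hj, hbase]
      exact ⟨fun h => iff_of_true h hj, fun h => h.mpr hj⟩
    · rw [if_neg hj, Formula.realize_not, hbase]
      exact ⟨fun h => iff_of_false h hj, fun h hr => hj (h.mp hr)⟩
  have con2_iff : ∀ (i : ℕ) (e : ℕ → C),
      ((rel2 i).Realize (Sum.elim B1 (fun t : Fin (s * (i + 1)) => e (t : ℕ)))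
        ↔ φ.Realize (Sum.elim (fun x => e (ga i x)) b)) := by
    intro i e
    simp only [hrel2]
    rw [Formula.realize_relabel]
    apply realize_congr_fv
    intro z hz
    rcases z with x | y
    · rfl
    · have hy : y ∈ Fb := by rw [hFb]; exact Finset.mem_preimage.2 hz
      exact hB1b y hy
  -- STEP 1 : finite configurations around `b` exist
  have claim : ∀ n : ℕ, ∃ e : ℕ → C,
      (∀ i, i < n → φ.Realize (Sum.elim (fun x => e (ga i x)) b)) ∧
      (∀ i j, i < n → j < n →
        (φ.Realize (Sum.elim (fun x => e (ga i x)) (fun y => e (gb j y))) ↔ j ≤ i)) := by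
    intro n
    rcases Nat.eq_zero_or_pos n with hn0 | hnpos
    · exact ⟨fun _ => c0, fun i hi => by omega, fun i j hi hj => by omega⟩
    set N : ℕ := s * n with hN
    have hNpos : 0 < N := Nat.mul_pos hspos hnpos
    set fN : ℕ → Fin N := fun t => ⟨t % N, Nat.mod_lt t hNpos⟩ with hfN
    have hcast : ∀ (tn : ℕ), tn < N → ((Fin.castAdd 0 (fN tn) : Fin (N + 0)) : ℕ) = tn := by
      intro tn h
      rw [Fin.coe_castAdd]
      simp only [hfN]
      exact Nat.mod_eq_of_lt h
    set conjA : ℕ × ℕ → L.BoundedFormula β (N + 0) := fun ij =>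
      if ij.2 ≤ ij.1 then
        BoundedFormula.relabel (Sum.elim
          (fun x => Sum.inr (fN (ga ij.1 x)))
          (fun y => (Sum.inr (fN (gb ij.2 y)) : β ⊕ Fin N))) φ
      else
        (BoundedFormula.relabel (Sum.elim
          (fun x => Sum.inr (fN (ga ij.1 x)))
          (fun y => (Sum.inr (fN (gb ij.2 y)) : β ⊕ Fin N))) φ).not with hconjA
    set conjB : ℕ → L.BoundedFormula β (N + 0) := fun i =>
      BoundedFormula.relabel (Sum.elim
        (fun x => (Sum.inr (fN (ga i x)) : β ⊕ Fin N))
        (fun y => Sum.inl y)) φ with hconjB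
    set χ : L.Formula β :=
      (finIInf ((Finset.range n) ×ˢ (Finset.range n)) conjA ⊓
        finIInf (Finset.range n) conjB).exs with hχ
    -- translation lemmas
    have hbaseA : ∀ (i j : ℕ), i < n → j < n → ∀ (w : β → C) (xs : Fin (N + 0) → C)
        (e : ℕ → C), (∀ (tn : ℕ) (h : tn < N), e tn = xs (Fin.castAdd 0 (fN tn))) →
        ((BoundedFormula.relabel (Sum.elim
          (fun x => Sum.inr (fN (ga i x)))
          (fun y => (Sum.inr (fN (gb j y)) : β ⊕ Fin N))) φ).Realize w xs ↔
          φ.Realize (Sum.elim (fun x => e (ga i x)) (fun y => e (gb j y)))) := by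
      intro i j hi hj w xs e he
      rw [BoundedFormula.realize_relabel]
      have hass : (Sum.elim w (xs ∘ Fin.castAdd 0)) ∘ (Sum.elim
          (fun x => Sum.inr (fN (ga i x)))
          (fun y => (Sum.inr (fN (gb j y)) : β ⊕ Fin N))) =
          Sum.elim (fun x => e (ga i x)) (fun y => e (gb j y)) := by
        funext z
        rcases z with x | y
        · simp only [Function.comp_apply, Sum.elim_inl, Sum.elim_inr]
          exact (he _ (ga_lt x hi)).symm
        · simp only [Function.comp_apply, Sum.elim_inr]
          exact (he _ (gb_lt y hj)).symm
      rw [hass]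
      have hxs0 : xs ∘ Fin.natAdd N = default := by funext t; exact t.elim0
      rw [hxs0]
      exact Iff.rfl
    have hconjA_iff : ∀ (i j : ℕ), i < n → j < n → ∀ (w : β → C) (xs : Fin (N + 0) → C)
        (e : ℕ → C), (∀ (tn : ℕ) (h : tn < N), e tn = xs (Fin.castAdd 0 (fN tn))) →
        ((conjA (i, j)).Realize w xs ↔
          (φ.Realize (Sum.elim (fun x => e (ga i x)) (fun y => e (gb j y))) ↔ j ≤ i)) := by
      intro i j hi hj w xs e he
      simp only [hconjA]
      by_cases hji : j ≤ i
      · rw [if_pos hji, hbaseA i j hi hj w xs e he]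
        exact ⟨fun h => iff_of_true h hji, fun h => h.mpr hji⟩
      · rw [if_neg hji, BoundedFormula.realize_not, hbaseA i j hi hj w xs e he]
        exact ⟨fun h => iff_of_false h hji, fun h hr => hji (h.mp hr)⟩
    have hconjB_iff : ∀ (i : ℕ), i < n → ∀ (w : β → C) (xs : Fin (N + 0) → C)
        (e : ℕ → C), (∀ (tn : ℕ) (h : tn < N), e tn = xs (Fin.castAdd 0 (fN tn))) →
        ((conjB i).Realize w xs ↔
          φ.Realize (Sum.elim (fun x => e (ga i x)) w)) := by
      intro i hi w xs e he
      simp only [hconjB]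
      rw [BoundedFormula.realize_relabel]
      have hass : (Sum.elim w (xs ∘ Fin.castAdd 0)) ∘ (Sum.elim
          (fun x => (Sum.inr (fN (ga i x)) : β ⊕ Fin N))
          (fun y => Sum.inl y)) =
          Sum.elim (fun x => e (ga i x)) w := by
        funext z
        rcases z with x | y
        · simp only [Function.comp_apply, Sum.elim_inl, Sum.elim_inr]
          exact (he _ (ga_lt x hi)).symm
        · simp only [Function.comp_apply, Sum.elim_inl, Sum.elim_inr]
      rw [hass]
      have hxs0 : xs ∘ Fin.natAdd N = default := by funext t; exact t.elim0
      rw [hxs0]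
      exact Iff.rfl
    -- χ is realized by b
    have hχb : χ.Realize b := by
      by_contra hnχ
      obtain ⟨u, v, huv⟩ := hcontra χ.not (Formula.realize_not.mpr hnχ)
      have hnotχ : ∀ l : ℕ, 1 ≤ l → ¬ χ.Realize (v l) := by
        intro l hl hreal
        have h0 := (huv 0 l).mpr hl
        rw [Formula.realize_inf, Formula.realize_relabel] at h0
        have h2 := h0.2
        rw [Sum.elim_comp_inr] at h2
        exact (Formula.realize_not.mp h2) hreal
      have hphi : ∀ k l : ℕ, 1 ≤ l → (φ.Realize (Sum.elim (u k) (v l)) ↔ k < l) := by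
        intro k l hl
        constructor
        · intro hreal
          refine (huv k l).mp ?_
          rw [Formula.realize_inf, Formula.realize_relabel]
          refine ⟨hreal, ?_⟩
          rw [Sum.elim_comp_inr]
          exact Formula.realize_not.mpr (hnotχ l hl)
        · intro hkl
          have h0 := (huv k l).mpr hkl
          rw [Formula.realize_inf] at h0
          exact h0.1
      -- the witness assignment
      set eW : ℕ → C := fun t =>
        if h1 : 1 ≤ t % s ∧ t % s - 1 < Fa.card then
          u (n - t / s) ((Fa.equivFin.symm ⟨t % s - 1, h1.2⟩ : α))
        else if h2 : 1 + Fa.card ≤ t % s ∧ t % s - 1 - Fa.card < Fb.card then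
          v (n - t / s + 1) ((Fb.equivFin.symm ⟨t % s - 1 - Fa.card, h2.2⟩ : β))
        else c0 with heW
      have heWa : ∀ (i : ℕ) (x : α) (hx : x ∈ Fa), eW (ga i x) = u (n - i) x := by
        intro i x hx
        have hta : (Fa.equivFin ⟨x, hx⟩ : ℕ) < Fa.card := (Fa.equivFin ⟨x, hx⟩).isLt
        have hga2 : ga i x = s * i + (1 + (Fa.equivFin ⟨x, hx⟩ : ℕ)) := by
          simp only [hga]; rw [dif_pos hx]
        have hlt : 1 + (Fa.equivFin ⟨x, hx⟩ : ℕ) < s := by omega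
        have hdiv : ga i x / s = i := by
          rw [hga2, Nat.mul_add_div hspos, Nat.div_eq_of_lt hlt]
          omega
        have hmod : ga i x % s = 1 + (Fa.equivFin ⟨x, hx⟩ : ℕ) := by
          rw [hga2, Nat.mul_add_mod]
          exact Nat.mod_eq_of_lt hlt
        simp only [heW, hdiv, hmod]
        rw [dif_pos (⟨by omega, by omega⟩ :
          1 ≤ 1 + (Fa.equivFin ⟨x, hx⟩ : ℕ) ∧
          1 + (Fa.equivFin ⟨x, hx⟩ : ℕ) - 1 < Fa.card)]
        congr 1
        have hfin2 : (⟨1 + (Fa.equivFin ⟨x, hx⟩ : ℕ) - 1, by omega⟩ : Fin Fa.card)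
            = Fa.equivFin ⟨x, hx⟩ := by
          apply Fin.ext
          show 1 + (Fa.equivFin ⟨x, hx⟩ : ℕ) - 1 = _
          omega
        rw [hfin2, Equiv.symm_apply_apply]
      have heWb : ∀ (j : ℕ) (y : β) (hy : y ∈ Fb), eW (gb j y) = v (n - j + 1) y := by
        intro j y hy
        have htb : (Fb.equivFin ⟨y, hy⟩ : ℕ) < Fb.card := (Fb.equivFin ⟨y, hy⟩).isLt
        have hgb2 : gb j y = s * j + (1 + Fa.card + (Fb.equivFin ⟨y, hy⟩ : ℕ)) := by
          simp only [hgb]; rw [dif_pos hy]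
        have hlt : 1 + Fa.card + (Fb.equivFin ⟨y, hy⟩ : ℕ) < s := by omega
        have hdiv : gb j y / s = j := by
          rw [hgb2, Nat.mul_add_div hspos, Nat.div_eq_of_lt hlt]
          omega
        have hmod : gb j y % s = 1 + Fa.card + (Fb.equivFin ⟨y, hy⟩ : ℕ) := by
          rw [hgb2, Nat.mul_add_mod]
          exact Nat.mod_eq_of_lt hlt
        simp only [heW, hdiv, hmod]
        rw [dif_neg (by omega :
          ¬ (1 ≤ 1 + Fa.card + (Fb.equivFin ⟨y, hy⟩ : ℕ) ∧
            1 + Fa.card + (Fb.equivFin ⟨y, hy⟩ : ℕ) - 1 < Fa.card))]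
        rw [dif_pos (⟨by omega, by omega⟩ :
          1 + Fa.card ≤ 1 + Fa.card + (Fb.equivFin ⟨y, hy⟩ : ℕ) ∧
          1 + Fa.card + (Fb.equivFin ⟨y, hy⟩ : ℕ) - 1 - Fa.card < Fb.card)]
        congr 1
        have hfin2 : (⟨1 + Fa.card + (Fb.equivFin ⟨y, hy⟩ : ℕ) - 1 - Fa.card, by omega⟩
            : Fin Fb.card) = Fb.equivFin ⟨y, hy⟩ := by
          apply Fin.ext
          show 1 + Fa.card + (Fb.equivFin ⟨y, hy⟩ : ℕ) - 1 - Fa.card = _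
          omega
        rw [hfin2, Equiv.symm_apply_apply]
      refine hnotχ (n+1) (by omega) ?_
      simp only [hχ]
      rw [BoundedFormula.realize_exs]
      refine ⟨fun t => eW (t : ℕ), ?_⟩
      rw [BoundedFormula.realize_inf]
      have heWxs : ∀ (tn : ℕ) (h : tn < N),
          eW tn = (fun t : Fin (N + 0) => eW (t : ℕ)) (Fin.castAdd 0 (fN tn)) := by
        intro tn h
        show eW tn = eW _
        rw [hcast tn h]
      constructor
      · rw [realize_finIInf]
        rintro ⟨i, j⟩ hmem
        rw [Finset.mem_product] at hmem
        have hi := Finset.mem_range.1 hmem.1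
        have hj := Finset.mem_range.1 hmem.2
        rw [hconjA_iff i j hi hj _ _ eW heWxs]
        have hcongr : φ.Realize (Sum.elim (fun x => eW (ga i x)) (fun y => eW (gb j y)))
            ↔ φ.Realize (Sum.elim (u (n - i)) (v (n - j + 1))) := by
          apply realize_congr_fv
          intro z hz
          rcases z with x | y
          · exact heWa i x (by rw [hFa]; exact Finset.mem_preimage.2 hz)
          · exact heWb j y (by rw [hFb]; exact Finset.mem_preimage.2 hz)
        rw [hcongr, hphi (n - i) (n - j + 1) (by omega)]
        omega
      · rw [realize_finIInf]
        intro i hmem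
        have hi := Finset.mem_range.1 hmem
        rw [hconjB_iff i hi _ _ eW heWxs]
        have hcongr : φ.Realize (Sum.elim (fun x => eW (ga i x)) (v (n+1)))
            ↔ φ.Realize (Sum.elim (u (n - i)) (v (n+1))) := by
          apply realize_congr_fv
          intro z hz
          rcases z with x | y
          · exact heWa i x (by rw [hFa]; exact Finset.mem_preimage.2 hz)
          · rfl
        rw [hcongr]
        exact (hphi (n - i) (n+1) (by omega)).mpr (by omega)
    -- extract the finite configuration from `hχb`
    simp only [hχ] at hχb
    rw [BoundedFormula.realize_exs] at hχb
    obtain ⟨xs, hxs⟩ := hχb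
    rw [BoundedFormula.realize_inf] at hxs
    obtain ⟨hxsA, hxsB⟩ := hxs
    rw [realize_finIInf] at hxsA
    rw [realize_finIInf] at hxsB
    set e : ℕ → C := fun t =>
      if h : t < N then xs (Fin.castAdd 0 (fN t)) else c0 with hedef
    have he : ∀ (tn : ℕ) (h : tn < N), e tn = xs (Fin.castAdd 0 (fN tn)) := by
      intro tn h
      simp only [hedef]
      rw [dif_pos h]
    refine ⟨e, ?_, ?_⟩
    · intro i hi
      have h2 := hxsB i (Finset.mem_range.2 hi)
      rw [hconjB_iff i hi _ _ e he] at h2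
      exact h2
    · intro i j hi hj
      have h2 := hxsA (i, j) (Finset.mem_product.2
        ⟨Finset.mem_range.2 hi, Finset.mem_range.2 hj⟩)
      rw [hconjA_iff i j hi hj _ _ e he] at h2
      exact h2
  -- STEP 2 : apply ω-saturation to get the full configuration
  set dec : ℕ → ((ℕ × ℕ) ⊕ ℕ) := fun k => (Denumerable.eqv ((ℕ × ℕ) ⊕ ℕ)).symm k with hdec
  set enc : ((ℕ × ℕ) ⊕ ℕ) → ℕ := fun d => Denumerable.eqv ((ℕ × ℕ) ⊕ ℕ) d with henc
  have hde : ∀ d, dec (enc d) = d := by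
    intro d
    simp only [hdec, henc, Equiv.symm_apply_apply]
  set Con : ((ℕ × ℕ) ⊕ ℕ) → Σ m : ℕ, Σ NN : ℕ, (L.Formula (Fin m ⊕ Fin NN)) × (Fin m → C) :=
    fun d => Sum.elim
      (fun ij => ⟨0, s * (max ij.1 ij.2 + 1),
        (if ij.2 ≤ ij.1 then rel1 ij.1 ij.2 else (rel1 ij.1 ij.2).not), Fin.elim0⟩)
      (fun i => ⟨q+1, s * (i + 1), rel2 i, B1⟩) d with hCon
  have hparA0 : ∀ (k : ℕ) (t : Fin ((Con (dec k)).1)),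
      (Con (dec k)).2.2.2 t ∈ insert c0 (Fb.image b) := by
    intro k
    rcases hdk : dec k with ij | i
    · intro t
      exact Fin.elim0 t
    · intro t
      show B1 t ∈ insert c0 (Fb.image b)
      simp only [hB1]
      by_cases h : (t : ℕ) < q
      · rw [dif_pos h]
        exact Finset.mem_insert_of_mem (Finset.mem_image.2 ⟨_, Finset.coe_mem _, rfl⟩)
      · rw [dif_neg h]
        exact Finset.mem_insert_self _ _
  have hfinK : ∀ K : ℕ, ∃ e : ℕ → C, ∀ k, k < K →
      ((Con (dec k)).2.2.1).Realize (Sum.elim ((Con (dec k)).2.2.2)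
        (fun t : Fin ((Con (dec k)).2.1) => e (t : ℕ))) := by
    intro K
    set nb : ℕ := ((Finset.range K).sup
      (fun k => Sum.elim (fun ij : ℕ × ℕ => max ij.1 ij.2) id (dec k))) + 1 with hnb
    obtain ⟨eK, heA, heB⟩ := claim nb
    refine ⟨eK, ?_⟩
    intro k hk
    have hbd : Sum.elim (fun ij : ℕ × ℕ => max ij.1 ij.2) id (dec k) < nb := by
      rw [hnb]
      exact Nat.lt_succ_of_le (Finset.le_sup
        (f := fun k => Sum.elim (fun ij : ℕ × ℕ => max ij.1 ij.2) id (dec k))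
        (Finset.mem_range.2 hk))
    rcases hdk : dec k with ij | i
    · obtain ⟨i, j⟩ := ij
      rw [hdk] at hbd
      simp only [Sum.elim_inl] at hbd
      show ((if j ≤ i then rel1 i j else (rel1 i j).not).Realize
        (Sum.elim (Fin.elim0 : Fin 0 → C) (fun t : Fin (s * (max i j + 1)) => eK (t : ℕ))))
      exact (con1_iff i j eK).mpr (heB i j (by omega) (by omega))
    · rw [hdk] at hbd
      simp only [Sum.elim_inr, id] at hbd
      show ((rel2 i).Realize (Sum.elim B1 (fun t : Fin (s * (i + 1)) => eK (t : ℕ))))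
      exact (con2_iff i eK).mpr (heA i (by omega))
  obtain ⟨e, he⟩ := omega_realize hsat hCinf (insert c0 (Fb.image b))
      (fun k => (Con (dec k)).1) (fun k => (Con (dec k)).2.1)
      (fun k => (Con (dec k)).2.2.1) (fun k => (Con (dec k)).2.2.2) hparA0 hfinK
  have hins : ∀ i : ℕ, φ.Realize (Sum.elim (fun x => e (ga i x)) b) := by
    intro i
    have h2 := he (enc (Sum.inr i))
    rw [hde] at h2
    have h3 : ((rel2 i).Realize (Sum.elim B1 (fun t : Fin (s * (i + 1)) => e (t : ℕ)))) := h2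
    exact (con2_iff i e).mp h3
  have horder : ∀ i j : ℕ,
      (φ.Realize (Sum.elim (fun x => e (ga i x)) (fun y => e (gb j y))) ↔ j ≤ i) := by
    intro i j
    have h2 := he (enc (Sum.inl (i, j)))
    rw [hde] at h2
    have h3 : ((if j ≤ i then rel1 i j else (rel1 i j).not).Realize
        (Sum.elim (Fin.elim0 : Fin 0 → C) (fun t : Fin (s * (max i j + 1)) => e (t : ℕ)))) := h2
    exact (con1_iff i j e).mp h3
  -- contradict stability of X
  set aa : ℕ → α → C := fun i x => e (ga i x) with haa
  set bb : ℕ → Fin (q+1) → C := fun j t =>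
    if h : (t : ℕ) < q then e (gb j ((Fb.equivFin.symm ⟨(t : ℕ), h⟩ : β))) else e 0 with hbb
  refine hstable ⟨q+1, (φ.relabel (Sum.elim Sum.inl (fun y => Sum.inr (ib y)))).not,
    aa, bb, ?_, ?_⟩
  · intro i
    simp only [haa, Set.mem_setOf_eq]
    exact hins i
  · intro i j
    rw [Formula.realize_not, Formula.realize_relabel]
    have hass : (Sum.elim (aa i) (bb j)) ∘
        (Sum.elim Sum.inl (fun y => (Sum.inr (ib y) : α ⊕ Fin (q+1)))) =
        Sum.elim (fun x => e (ga i x)) (fun y => e (gb j y)) := by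
      funext z
      rcases z with x | y
      · rfl
      · simp only [Function.comp_apply, Sum.elim_inl, Sum.elim_inr]
        by_cases hy : y ∈ Fb
        · have hiby : ib y = (Fb.equivFin ⟨y, hy⟩).castSucc := by
            simp only [hib]; rw [dif_pos hy]
          have hc : (((Fb.equivFin ⟨y, hy⟩).castSucc : Fin (q+1)) : ℕ) < q := by
            exact (Fb.equivFin ⟨y, hy⟩).isLt
          simp only [hbb]
          rw [hiby, dif_pos hc]
          have hfq : (⟨(((Fb.equivFin ⟨y, hy⟩).castSucc : Fin (q+1)) : ℕ), hc⟩ : Fin q)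
              = Fb.equivFin ⟨y, hy⟩ := by
            apply Fin.ext; simp
          rw [hfq, Equiv.symm_apply_apply]
        · have hiby : ib y = Fin.last q := by
            simp only [hib]; rw [dif_neg hy]
          have hgb0 : gb j y = 0 := by
            simp only [hgb]; rw [dif_neg hy]
          simp only [hbb]
          rw [hiby, dif_neg (by simp : ¬ (((Fin.last q : Fin (q+1)) : ℕ) < q)), hgb0]
    rw [hass, horder i j]
    omega

end Main

end Statement18Aux

/-- Work in a monster model of a dependent theory.  If `φ(x,b)` defines a
stable set, then there is `θ(y) ∈ tp(b/∅)` such that `φ(x,y) ∧ θ(y)` has NOP. -/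
theorem statement_18
    {L : FirstOrder.Language.{v, w}} {C : Type u} [L.Structure C]
    (hmon : IsMonster L C) (hdep : IsDependent L C)
    {α β : Type} (φ : L.Formula (α ⊕ β)) (b : β → C)
    (hstable : ¬ UnstableSet L {v : α → C | φ.Realize (Sum.elim v b)}) :
    ∃ θ : L.Formula β, θ.Realize b ∧
      ¬ FormulaHasOP (C := C) (φ ⊓ θ.relabel Sum.inr) := by
  exact Statement18Aux.statement_18' hmon.1 φ b hstable
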